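/- (De Giorgi iteration lemma) Let Z be a bounded nonnegative function on [t₀, t₁]. Suppose there exist constants A, B, C ≥ 0, exponents α, β > 0, and θ ∈ [0,1) such that for all t₀ ≤ τ < t ≤ t₁ one has Z(t) ≤ θ Z(τ) + A/(t-τ)^α + B/(t-τ)^β + C. Then for every λ ∈ (θ^{1/α}, 1) ∩ (θ^{1/β}, 1), Z(t₁) ≤ A·c(α,λ,θ)/(t₁-t₀)^α + B·c(β,λ,θ)/(t₁-t₀)^β + C/(1-θ), where c(γ,λ,θ) = 1/((1-λ)^γ (1 - θ/λ^γ)). -/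

import Mathlib

lemma geom_aux2 {x : ℝ} (h0 : 0 ≤ x) (h1 : x < 1) (N : ℕ) :
    ∑ i ∈ Finset.range N, x ^ i ≤ 1 / (1 - x) := by
  rw [geom_sum_eq h1.ne N]
  have hx : (0:ℝ) < 1 - x := by linarith
  have : (x ^ N - 1) / (x - 1) = (1 - x ^ N) / (1 - x) := by
    rw [← neg_div_neg_eq]; ring_nf
  rw [this]
  gcongr
  have : 0 ≤ x ^ N := pow_nonneg h0 N
  linarith

theorem stmt_2 (t₀ t₁ : ℝ) (ht : t₀ < t₁) (Z : ℝ → ℝ)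
    (hbdd : ∃ M : ℝ, ∀ t ∈ Set.Icc t₀ t₁, Z t ≤ M)
    (hnonneg : ∀ t ∈ Set.Icc t₀ t₁, 0 ≤ Z t)
    (A B C α β θ : ℝ) (hA : 0 ≤ A) (hB : 0 ≤ B) (hC : 0 ≤ C)
    (hα : 0 < α) (hβ : 0 < β) (hθ0 : 0 ≤ θ) (hθ1 : θ < 1)
    (hrec : ∀ τ t : ℝ, t₀ ≤ τ → τ < t → t ≤ t₁ →
      Z t ≤ θ * Z τ + A / (t - τ) ^ α + B / (t - τ) ^ β + C) :
    ∀ l : ℝ, θ ^ (1 / α) < l → θ ^ (1 / β) < l → l < 1 →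
      Z t₁ ≤ A * (1 / ((1 - l) ^ α * (1 - θ / l ^ α))) / (t₁ - t₀) ^ α
        + B * (1 / ((1 - l) ^ β * (1 - θ / l ^ β))) / (t₁ - t₀) ^ β
        + C / (1 - θ) := by
  intro l hlα hlβ hl1
  obtain ⟨M, hM⟩ := hbdd
  set T : ℝ := t₁ - t₀ with hT
  have hT0 : 0 < T := by simp [hT]; linarith
  have hl0 : 0 < l := lt_of_le_of_lt (Real.rpow_nonneg hθ0 _) hlα
  have h1l : 0 < 1 - l := by linarith
  -- θ < l ^ γ for γ ∈ {α, β}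
  have key : ∀ γ : ℝ, 0 < γ → θ ^ (1/γ) < l → θ < l ^ γ := by
    intro γ hγ hlt
    have h1 : (θ ^ (1/γ)) ^ γ < l ^ γ :=
      Real.rpow_lt_rpow (Real.rpow_nonneg hθ0 _) hlt hγ
    rwa [← Real.rpow_mul hθ0, one_div_mul_cancel hγ.ne', Real.rpow_one] at h1
  have hθα : θ < l ^ α := key α hα hlα
  have hθβ : θ < l ^ β := key β hβ hlβ
  have hlα0 : (0:ℝ) < l ^ α := Real.rpow_pos_of_pos hl0 α
  have hlβ0 : (0:ℝ) < l ^ β := Real.rpow_pos_of_pos hl0 β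
  set qα : ℝ := θ / l ^ α with hqα
  set qβ : ℝ := θ / l ^ β with hqβ
  have hqα1 : qα < 1 := (div_lt_one hlα0).2 hθα
  have hqβ1 : qβ < 1 := (div_lt_one hlβ0).2 hθβ
  have hqα0 : 0 ≤ qα := div_nonneg hθ0 hlα0.le
  have hqβ0 : 0 ≤ qβ := div_nonneg hθ0 hlβ0.le
  set Kα : ℝ := A / ((1 - l) ^ α * T ^ α) with hKα
  set Kβ : ℝ := B / ((1 - l) ^ β * T ^ β) with hKβ
  have h1lα : (0:ℝ) < (1 - l) ^ α := Real.rpow_pos_of_pos h1l α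
  have h1lβ : (0:ℝ) < (1 - l) ^ β := Real.rpow_pos_of_pos h1l β
  have hTα : (0:ℝ) < T ^ α := Real.rpow_pos_of_pos hT0 α
  have hTβ : (0:ℝ) < T ^ β := Real.rpow_pos_of_pos hT0 β
  have hKα0 : 0 ≤ Kα := div_nonneg hA (by positivity)
  have hKβ0 : 0 ≤ Kβ := div_nonneg hB (by positivity)
  -- the sequence
  set s : ℕ → ℝ := fun i => t₀ + l ^ i * T with hs
  have hs0 : s 0 = t₁ := by simp [hs, hT]
  have hmem : ∀ i, s i ∈ Set.Icc t₀ t₁ := by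
    intro i
    constructor
    · have : 0 ≤ l ^ i * T := by positivity
      simp [hs]; linarith
    · have h1 : l ^ i ≤ 1 := pow_le_one₀ hl0.le hl1.le
      have h2 : l ^ i * (t₁ - t₀) ≤ t₁ - t₀ := by nlinarith
      simp [hs, hT]; linarith
  -- gap computation: (s i - s (i+1)) = (1-l) * l^i * T, and its rpow
  have hgap : ∀ i : ℕ, s i - s (i+1) = (1 - l) * l ^ i * T := by
    intro i; simp [hs, pow_succ]; ring
  have hgap_pos : ∀ i : ℕ, 0 < (1 - l) * l ^ i * T := by
    intro i; positivity
  -- rpow of the gap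
  have hpow : ∀ (γ : ℝ) (i : ℕ), ((1 - l) * l ^ i * T) ^ γ
      = (1 - l) ^ γ * T ^ γ * (l ^ γ) ^ i := by
    intro γ i
    rw [Real.mul_rpow (by positivity) hT0.le, Real.mul_rpow h1l.le (by positivity)]
    have : (l ^ i : ℝ) ^ γ = (l ^ γ) ^ i := by
      rw [← Real.rpow_natCast l i, ← Real.rpow_mul hl0.le,
        mul_comm, Real.rpow_mul hl0.le, Real.rpow_natCast]
    rw [this]; ring
  -- one step of the iteration
  have hstep : ∀ i : ℕ, Z (s i) ≤ θ * Z (s (i+1))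
      + Kα * ((l ^ α)⁻¹) ^ i + Kβ * ((l ^ β)⁻¹) ^ i + C := by
    intro i
    have h1 := hrec (s (i+1)) (s i) (hmem (i+1)).1
      (by have := hgap i; have := hgap_pos i; linarith) (hmem i).2
    rw [hgap i, hpow α i, hpow β i] at h1
    have eα : A / ((1 - l) ^ α * T ^ α * (l ^ α) ^ i) = Kα * ((l ^ α)⁻¹) ^ i := by
      rw [hKα, div_mul_eq_div_div, div_eq_mul_inv (A / _), inv_pow]
    have eβ : B / ((1 - l) ^ β * T ^ β * (l ^ β) ^ i) = Kβ * ((l ^ β)⁻¹) ^ i := by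
      rw [hKβ, div_mul_eq_div_div, div_eq_mul_inv (B / _), inv_pow]
    rwa [eα, eβ] at h1
  -- iterated bound
  have hiter : ∀ N : ℕ, Z t₁ ≤ θ ^ N * Z (s N)
      + ∑ i ∈ Finset.range N,
        (Kα * qα ^ i + Kβ * qβ ^ i + C * θ ^ i) := by
    intro N
    induction N with
    | zero => simp [hs0]
    | succ N ih =>
        have h2 := mul_le_mul_of_nonneg_left (hstep N) (pow_nonneg hθ0 N)
        have hq : ∀ γ : ℝ, θ ^ N * (((l ^ γ)⁻¹) ^ N) = (θ / l ^ γ) ^ N := by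
          intro γ; rw [← mul_pow]; ring_nf
        calc Z t₁ ≤ θ ^ N * Z (s N) + ∑ i ∈ Finset.range N,
              (Kα * qα ^ i + Kβ * qβ ^ i + C * θ ^ i) := ih
          _ ≤ θ ^ N * (θ * Z (s (N+1)) + Kα * ((l ^ α)⁻¹) ^ N
                + Kβ * ((l ^ β)⁻¹) ^ N + C) + ∑ i ∈ Finset.range N,
              (Kα * qα ^ i + Kβ * qβ ^ i + C * θ ^ i) := by linarith
          _ = θ ^ (N+1) * Z (s (N+1)) + ∑ i ∈ Finset.range (N+1),
              (Kα * qα ^ i + Kβ * qβ ^ i + C * θ ^ i) := by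
              rw [Finset.sum_range_succ, hqα, hqβ, ← hq α, ← hq β, pow_succ]
              ring
  -- bound the sum by geometric series
  set target : ℝ := Kα * (1 / (1 - qα)) + Kβ * (1 / (1 - qβ)) + C * (1 / (1 - θ))
    with htarget
  set M' : ℝ := max M 0 with hM'
  have hM'0 : 0 ≤ M' := le_max_right _ _
  have hbound : ∀ N : ℕ, Z t₁ ≤ θ ^ N * M' + target := by
    intro N
    have hsum : ∑ i ∈ Finset.range N,
        (Kα * qα ^ i + Kβ * qβ ^ i + C * θ ^ i) ≤ target := by
      rw [htarget]
      have e : ∑ i ∈ Finset.range N, (Kα * qα ^ i + Kβ * qβ ^ i + C * θ ^ i)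
          = Kα * (∑ i ∈ Finset.range N, qα ^ i)
            + Kβ * (∑ i ∈ Finset.range N, qβ ^ i)
            + C * (∑ i ∈ Finset.range N, θ ^ i) := by
        rw [Finset.mul_sum, Finset.mul_sum, Finset.mul_sum,
          ← Finset.sum_add_distrib, ← Finset.sum_add_distrib]
      rw [e]
      gcongr
      · exact geom_aux2 hqα0 hqα1 N
      · exact geom_aux2 hqβ0 hqβ1 N
      · exact geom_aux2 hθ0 hθ1 N
    have hZ : Z (s N) ≤ M' := le_trans (hM _ (hmem N)) (le_max_left _ _)
    have h3 : θ ^ N * Z (s N) ≤ θ ^ N * M' :=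
      mul_le_mul_of_nonneg_left hZ (pow_nonneg hθ0 N)
    have := hiter N
    linarith
  -- pass to the limit
  have hlim : Filter.Tendsto (fun N : ℕ => θ ^ N * M' + target)
      Filter.atTop (nhds (0 * M' + target)) :=
    (((tendsto_pow_atTop_nhds_zero_of_lt_one hθ0 hθ1).mul_const M').add_const target)
  have hfin : Z t₁ ≤ 0 * M' + target := ge_of_tendsto' hlim hbound
  rw [zero_mul, zero_add] at hfin
  -- identify target with the stated quantity
  have hq1α : (0:ℝ) < 1 - qα := by linarith
  have hq1β : (0:ℝ) < 1 - qβ := by linarith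
  have eqα : Kα * (1 / (1 - qα)) = A * (1 / ((1 - l) ^ α * (1 - qα))) / T ^ α := by
    rw [hKα]; field_simp
  have eqβ : Kβ * (1 / (1 - qβ)) = B * (1 / ((1 - l) ^ β * (1 - qβ))) / T ^ β := by
    rw [hKβ]; field_simp
  have eqC : C * (1 / (1 - θ)) = C / (1 - θ) := by ring
  rw [htarget, eqα, eqβ, eqC] at hfin
  exact hfin
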